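/- For a deterministic Mealy machine with a fixed probing strategy att, define R_att(i) as the set of knowledge sets of all length-i probes following att. Then for every i, R_att(i) is a partition of S_v, and R_att(i+1) refines R_att(i). -/
import Mathlib


/-- Run a Mealy machine along the inputs of a probe. -/
def mrun {S I O : Type*} (upd : I → S → S) : List (I × O) → S → S
  | [], s => s
  | io :: p, s => mrun upd p (upd io.1 s)

/-- A state `s` is coherent with a probe if the machine, started in `s`,
produces the probe's observations on the probe's inputs. -/
def Coherent {S I O : Type*} (upd : I → S → S) (view : I → S → O) :
    List (I × O) → S → Prop
  | [], _ => True
  | io :: p, s => view io.1 s = io.2 ∧ Coherent upd view p (upd io.1 s)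

/-- Knowledge set of a probe: the possible initial states coherent with it. -/
def Kset {S I O : Type*} (upd : I → S → S) (view : I → S → O) (Sv : Set S)
    (p : List (I × O)) : Set S :=
  {s ∈ Sv | Coherent upd view p s}

/-- Final knowledge set of a probe: states the machine may be in afterwards. -/
def FKset {S I O : Type*} (upd : I → S → S) (view : I → S → O) (Sv : Set S)
    (p : List (I × O)) : Set S :=
  mrun upd p '' Kset upd view Sv p

/-- The probe's inputs follow the probing strategy `att`. -/
def Follows {I O : Type*} (att : List O → I) (p : List (I × O)) : Prop :=
  ∀ i (h : i < p.length), (p.get ⟨i, h⟩).1 = att ((p.map Prod.snd).take i)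

/-- A probe of `att` is depleted if no realizable extension of it following `att`
refines its knowledge set. -/
def Depleted {S I O : Type*} (upd : I → S → S) (view : I → S → O) (Sv : Set S)
    (att : List O → I) (p : List (I × O)) : Prop :=
  Follows att p ∧ ∀ q, Follows att q → p <+: q → (Kset upd view Sv q).Nonempty →
    Kset upd view Sv q = Kset upd view Sv p

/-- The knowledge sets produced by the depleted probes of strategy `att`. -/
def KnowledgeSets {S I O : Type*} (upd : I → S → S) (view : I → S → O)
    (Sv : Set S) (att : List O → I) : Set (Set S) :=
  {K | ∃ p, Depleted upd view Sv att p ∧ K = Kset upd view Sv p ∧ K.Nonempty}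

/-- Cache observation: `true` for a hit, `false` for a miss. -/
def viewCache (A : ℕ) (b : ℕ) (c : ℕ → ℕ) : Bool := decide (c b < A)

lemma follows_cons {I O : Type*} (att : List O → I) (io : I × O) (p : List (I × O)) :
    Follows att (io :: p) ↔ io.1 = att [] ∧ Follows (fun os => att (io.2 :: os)) p := by
  constructor
  · intro h
    refine ⟨by simpa using h 0 (Nat.succ_pos _), fun i hi => ?_⟩
    have := h (i + 1) (by simpa using Nat.succ_lt_succ hi)
    simpa using this
  · rintro ⟨h0, h⟩ i hi
    cases i with
    | zero => simpa using h0
    | succ i =>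
      have := h i (by simpa using Nat.lt_of_succ_lt_succ hi)
      simpa using this

lemma coherent_of_append {S I O : Type*} (upd : I → S → S) (view : I → S → O) :
    ∀ (p q : List (I × O)) (s : S), Coherent upd view (p ++ q) s → Coherent upd view p s
  | [], _, _, _ => trivial
  | _ :: p, q, s, h => ⟨h.1, coherent_of_append upd view p q _ h.2⟩

lemma coherent_unique {S I O : Type*} (upd : I → S → S) (view : I → S → O) :
    ∀ (p q : List (I × O)) (att : List O → I) (s : S),
      p.length = q.length → Follows att p → Follows att q →
      Coherent upd view p s → Coherent upd view q s → p = q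
  | [], [], _, _, _, _, _, _, _ => rfl
  | [], _ :: _, _, _, hlen, _, _, _, _ => by simp at hlen
  | _ :: _, [], _, _, hlen, _, _, _, _ => by simp at hlen
  | io :: p, jo :: q, att, s, hlen, hfp, hfq, hcp, hcq => by
      obtain ⟨h1, h2⟩ := (follows_cons att io p).1 hfp
      obtain ⟨h1', h2'⟩ := (follows_cons att jo q).1 hfq
      have hi : io.1 = jo.1 := h1.trans h1'.symm
      have ho : io.2 = jo.2 := by rw [← hcp.1, ← hcq.1, hi]
      have hio : io = jo := Prod.ext hi ho
      cases hio
      have := coherent_unique upd view p q (fun os => att (io.2 :: os)) (upd io.1 s)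
        (Nat.succ_injective hlen) h2 h2' hcp.2 hcq.2
      rw [this]

def mkProbe {S I O : Type*} (upd : I → S → S) (view : I → S → O) :
    ℕ → (List O → I) → S → List (I × O)
  | 0, _, _ => []
  | n + 1, att, s =>
    (att [], view (att []) s) ::
      mkProbe upd view n (fun os => att (view (att []) s :: os)) (upd (att []) s)

lemma mkProbe_length {S I O : Type*} (upd : I → S → S) (view : I → S → O) :
    ∀ (n : ℕ) (att : List O → I) (s : S), (mkProbe upd view n att s).length = n
  | 0, _, _ => rfl
  | n + 1, att, s => by simp [mkProbe, mkProbe_length upd view n]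

lemma mkProbe_follows {S I O : Type*} (upd : I → S → S) (view : I → S → O) :
    ∀ (n : ℕ) (att : List O → I) (s : S), Follows att (mkProbe upd view n att s)
  | 0, _, _ => fun i hi => by simp [mkProbe] at hi
  | n + 1, att, s => by
      rw [mkProbe, follows_cons]
      exact ⟨rfl, mkProbe_follows upd view n _ _⟩

lemma mkProbe_coherent {S I O : Type*} (upd : I → S → S) (view : I → S → O) :
    ∀ (n : ℕ) (att : List O → I) (s : S), Coherent upd view (mkProbe upd view n att s) s
  | 0, _, _ => trivial
  | n + 1, att, s => ⟨rfl, mkProbe_coherent upd view n _ _⟩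

lemma follows_take {I O : Type*} (att : List O → I) (p : List (I × O)) (n : ℕ)
    (h : Follows att p) : Follows att (p.take n) := by
  intro i hi
  simp only [List.length_take, lt_min_iff] at hi
  have hlt : i < p.length := hi.2
  have hin : i < n := hi.1
  have := h i hlt
  simp only [List.get_eq_getElem] at this ⊢
  rw [List.getElem_take, this]
  simp [List.map_take, List.take_take, min_eq_left hin.le]

/-- For every `i`, the family `R_att(i)` of knowledge sets of length-`i` probes
following the strategy `att` is a partition of `Sv` (distinct knowledge sets are
disjoint and every possible state is covered), and `R_att(i+1)` refines
`R_att(i)`. -/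
theorem knowledge_sets_partition_and_refine {S I O : Type*}
    (upd : I → S → S) (view : I → S → O) (Sv : Set S) (att : List O → I) :
    ∀ i : ℕ,
      (∀ p q : List (I × O), p.length = i → q.length = i →
        Follows att p → Follows att q →
        Kset upd view Sv p ≠ Kset upd view Sv q →
        Disjoint (Kset upd view Sv p) (Kset upd view Sv q)) ∧
      (∀ s ∈ Sv, ∃ p : List (I × O), p.length = i ∧ Follows att p ∧
        s ∈ Kset upd view Sv p) ∧
      (∀ q : List (I × O), q.length = i + 1 → Follows att q →
        ∃ p : List (I × O), p.length = i ∧ Follows att p ∧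
          Kset upd view Sv q ⊆ Kset upd view Sv p) := by
  intro i
  refine ⟨?_, ?_, ?_⟩
  · intro p q hp hq hfp hfq hne
    by_contra hd
    obtain ⟨s, hsp, hsq⟩ := Set.not_disjoint_iff.1 hd
    exact hne (by rw [coherent_unique upd view p q att s (hp.trans hq.symm) hfp hfq hsp.2 hsq.2])
  · intro s hs
    exact ⟨mkProbe upd view i att s, mkProbe_length upd view i att s,
      mkProbe_follows upd view i att s, hs, mkProbe_coherent upd view i att s⟩
  · intro q hq hfq
    refine ⟨q.take i, by simp [List.length_take, hq], follows_take att q i hfq, ?_⟩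
    rintro s ⟨hs, hc⟩
    refine ⟨hs, ?_⟩
    have := q.take_append_drop i
    exact coherent_of_append upd view (q.take i) (q.drop i) s (by rwa [this])
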